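/- arXiv:1109.6259 — 2 statements merged into one kernel-verified Lean document; each statement's English description precedes it below -/
import Mathlib

section
/- Let K ∈ 𝔹^{n_u×n_y}, G ∈ 𝔹^{n_y×n_u}, and define Z_0 = K, Z_{m+1} = Z_m + Z_m G Z_m (Boolean operations). If Z_{m*} = Z_{m*+1} for some m*, then Z_{m*} satisfies Z_{m*} G Z_{m*} ≤ Z_{m*} and K ≤ Z_{m*}, and moreover Z_{m*} ≤ Z for every Z ∈ 𝔹^{n_u×n_y} with Z G Z ≤ Z and K ≤ Z. In particular Z_{m*} is the unique minimal such matrix. -/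
/-- Boolean (OR/AND semiring) matrix multiplication. -/
noncomputable def bmul {a b c : ℕ} (X : Matrix (Fin a) (Fin b) Bool) (Y : Matrix (Fin b) (Fin c) Bool) :
    Matrix (Fin a) (Fin c) Bool :=
  fun i k => Finset.univ.sup fun j => X i j && Y j k

/-- Entrywise Boolean (OR) addition of matrices. -/
def badd {a b : ℕ} (X Y : Matrix (Fin a) (Fin b) Bool) : Matrix (Fin a) (Fin b) Bool :=
  fun i j => X i j || Y i j

/-- The sequence Z_0 = K, Z_{m+1} = Z_m + Z_m G Z_m. -/
noncomputable def Zseq {nu ny : ℕ} (K : Matrix (Fin nu) (Fin ny) Bool) (G : Matrix (Fin ny) (Fin nu) Bool) :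
    ℕ → Matrix (Fin nu) (Fin ny) Bool
  | 0 => K
  | m + 1 => badd (Zseq K G m) (bmul (bmul (Zseq K G m) G) (Zseq K G m))

/-- kterm K G s = K (G K)^s in the Boolean semiring. -/
noncomputable def kterm {nu ny : ℕ} (K : Matrix (Fin nu) (Fin ny) Bool) (G : Matrix (Fin ny) (Fin nu) Bool) :
    ℕ → Matrix (Fin nu) (Fin ny) Bool
  | 0 => K
  | s + 1 => bmul (kterm K G s) (bmul G K)

/-- Boolean (OR) sum of the matrices f 0, ..., f (N-1). -/
noncomputable def bsum {a b : ℕ} (N : ℕ) (f : ℕ → Matrix (Fin a) (Fin b) Bool) :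
    Matrix (Fin a) (Fin b) Bool :=
  fun i j => (Finset.range N).sup fun s => f s i j

/-- Number of nonzero (true) entries. -/
def ncount {a b : ℕ} (Z : Matrix (Fin a) (Fin b) Bool) : ℕ :=
  ∑ i : Fin a, ∑ j : Fin b, if Z i j then 1 else 0


lemma bool_le_iff {x y : Bool} : x ≤ y ↔ (x = true → y = true) := by
  cases x <;> cases y <;> simp

lemma sup_true_iff {α : Type*} (s : Finset α) (f : α → Bool) :
    s.sup f = true ↔ ∃ a ∈ s, f a = true := by
  constructor
  · intro h
    by_contra hc
    push_neg at hc
    have : s.sup f = (⊥ : Bool) := (Finset.sup_eq_bot_iff _ _).mpr fun a ha => by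
      simpa using hc a ha
    simp [this] at h
  · rintro ⟨a, ha, hfa⟩
    have := Finset.le_sup (f := f) ha
    rw [hfa] at this
    exact le_antisymm (by simp) this

lemma bmul_mono {a b c : ℕ} {X X' : Matrix (Fin a) (Fin b) Bool}
    {Y Y' : Matrix (Fin b) (Fin c) Bool}
    (hX : ∀ i j, X i j ≤ X' i j) (hY : ∀ i j, Y i j ≤ Y' i j) :
    ∀ i k, bmul X Y i k ≤ bmul X' Y' i k := by
  intro i k
  rw [bool_le_iff]
  unfold bmul
  rw [sup_true_iff, sup_true_iff]
  rintro ⟨j, -, hj⟩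
  rw [Bool.and_eq_true] at hj
  refine ⟨j, Finset.mem_univ j, ?_⟩
  rw [Bool.and_eq_true]
  exact ⟨(bool_le_iff.mp (hX i j)) hj.1, (bool_le_iff.mp (hY j k)) hj.2⟩

lemma K_le_Zseq {nu ny : ℕ} (K : Matrix (Fin nu) (Fin ny) Bool)
    (G : Matrix (Fin ny) (Fin nu) Bool) (m : ℕ) :
    ∀ i j, K i j ≤ Zseq K G m i j := by
  induction m with
  | zero => intro i j; exact le_refl _
  | succ m ih =>
    intro i j
    refine le_trans (ih i j) ?_
    show _ ≤ badd _ _ i j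
    unfold badd
    cases Zseq K G m i j <;> simp

lemma Zseq_le {nu ny : ℕ} (K : Matrix (Fin nu) (Fin ny) Bool)
    (G : Matrix (Fin ny) (Fin nu) Bool) (Z : Matrix (Fin nu) (Fin ny) Bool)
    (hQI : ∀ i j, bmul (bmul Z G) Z i j ≤ Z i j) (hKZ : ∀ i j, K i j ≤ Z i j) (m : ℕ) :
    ∀ i j, Zseq K G m i j ≤ Z i j := by
  induction m with
  | zero => exact hKZ
  | succ m ih =>
    intro i j
    show badd _ _ i j ≤ _
    unfold badd
    have h2 := bmul_mono (bmul_mono ih (fun i j => le_refl (G i j))) ih i j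
    rw [bool_le_iff] at *
    intro hp
    rcases Bool.or_eq_true_iff.mp hp with hp | hp
    · exact (bool_le_iff.mp (ih i j)) hp
    · exact (bool_le_iff.mp (hQI i j)) (h2 hp)

theorem stmt6 {nu ny : ℕ} (K : Matrix (Fin nu) (Fin ny) Bool)
    (G : Matrix (Fin ny) (Fin nu) Bool) (mstar : ℕ)
    (h : Zseq K G mstar = Zseq K G (mstar + 1)) :
    (∀ i j, bmul (bmul (Zseq K G mstar) G) (Zseq K G mstar) i j ≤ Zseq K G mstar i j) ∧
    (∀ i j, K i j ≤ Zseq K G mstar i j) ∧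
    (∀ Z : Matrix (Fin nu) (Fin ny) Bool,
      (∀ i j, bmul (bmul Z G) Z i j ≤ Z i j) → (∀ i j, K i j ≤ Z i j) →
      ∀ i j, Zseq K G mstar i j ≤ Z i j) := by
  refine ⟨?_, K_le_Zseq K G mstar, fun Z hQI hKZ => Zseq_le K G Z hQI hKZ mstar⟩
  intro i j
  conv_rhs => rw [h]
  show _ ≤ badd _ _ i j
  unfold badd
  cases bmul (bmul (Zseq K G mstar) G) (Zseq K G mstar) i j <;> simp
end

section
/- Let K ∈ 𝔹^{n_u×n_y}, G ∈ 𝔹^{n_y×n_u}, n = min(n_u, n_y), and define Z_0 = K, Z_{m+1} = Z_m + Z_m G Z_m. Then Z_{⌈log₂ n⌉} = Z_{⌈log₂ n⌉ + 1}, i.e., the sequence converges in at most ⌈log₂ n⌉ steps. -/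
lemma bmul_true_iff {a b c : ℕ} (X : Matrix (Fin a) (Fin b) Bool) (Y : Matrix (Fin b) (Fin c) Bool)
    (i : Fin a) (k : Fin c) : bmul X Y i k = true ↔ ∃ j, X i j = true ∧ Y j k = true := by
  constructor
  · intro h
    by_contra hc
    push_neg at hc
    have : (Finset.univ.sup fun j => X i j && Y j k) = false := by
      rw [show (false : Bool) = ⊥ from rfl, Finset.sup_eq_bot_iff]
      intro j _
      rcases Bool.eq_false_or_eq_true (X i j) with h1 | h1
      · simp [h1, hc j h1]
      · simp [h1]
    rw [bmul] at h
    rw [this] at h; exact Bool.false_ne_true h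
  · rintro ⟨j, h1, h2⟩
    have := Finset.le_sup (f := fun j => X i j && Y j k) (Finset.mem_univ j)
    simp only [h1, h2, Bool.and_self] at this
    exact le_antisymm (by simp) this

lemma bmul_assoc {a b c d : ℕ} (X : Matrix (Fin a) (Fin b) Bool) (Y : Matrix (Fin b) (Fin c) Bool)
    (Z : Matrix (Fin c) (Fin d) Bool) : bmul (bmul X Y) Z = bmul X (bmul Y Z) := by
  funext i l
  rw [Bool.eq_iff_iff, bmul_true_iff, bmul_true_iff]
  constructor
  · rintro ⟨k, hk, hz⟩
    rw [bmul_true_iff] at hk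
    obtain ⟨j, hx, hy⟩ := hk
    exact ⟨j, hx, (bmul_true_iff _ _ _ _).2 ⟨k, hy, hz⟩⟩
  · rintro ⟨j, hx, h⟩
    rw [bmul_true_iff] at h
    obtain ⟨k, hy, hz⟩ := h
    exact ⟨k, (bmul_true_iff _ _ _ _).2 ⟨j, hx, hy⟩, hz⟩

lemma kterm_glue {nu ny : ℕ} (K : Matrix (Fin nu) (Fin ny) Bool) (G : Matrix (Fin ny) (Fin nu) Bool)
    (s t : ℕ) : bmul (bmul (kterm K G s) G) (kterm K G t) = kterm K G (s + t + 1) := by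
  induction t with
  | zero => show bmul (bmul (kterm K G s) G) K = _; rw [bmul_assoc]; rfl
  | succ t ih =>
    show bmul (bmul (kterm K G s) G) (bmul (kterm K G t) (bmul G K)) = _
    rw [← bmul_assoc, ih]
    rfl

def IsPath {nu ny : ℕ} (K : Matrix (Fin nu) (Fin ny) Bool) (G : Matrix (Fin ny) (Fin nu) Bool)
    (s : ℕ) (u : ℕ → Fin nu) (y : ℕ → Fin ny) : Prop :=
  (∀ k ≤ s, K (u k) (y k) = true) ∧ (∀ k < s, G (y k) (u (k + 1)) = true)

lemma kterm_true_iff {nu ny : ℕ} (K : Matrix (Fin nu) (Fin ny) Bool) (G : Matrix (Fin ny) (Fin nu) Bool)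
    (s : ℕ) (i : Fin nu) (j : Fin ny) :
    kterm K G s i j = true ↔ ∃ u y, u 0 = i ∧ y s = j ∧ IsPath K G s u y := by
  induction s generalizing j with
  | zero =>
    constructor
    · intro h
      exact ⟨fun _ => i, fun _ => j, rfl, rfl, fun k _ => h, fun k hk => absurd hk (by omega)⟩
    · rintro ⟨u, y, hu, hy, hP, _⟩
      have := hP 0 le_rfl
      rwa [hu, hy] at this
  | succ s ih =>
    show bmul (kterm K G s) (bmul G K) i j = true ↔ _
    rw [bmul_true_iff]
    constructor
    · rintro ⟨a, ha, hb⟩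
      rw [bmul_true_iff] at hb
      obtain ⟨b, hG, hK⟩ := hb
      obtain ⟨u, y, hu, hy, hP1, hP2⟩ := (ih a).1 ha
      refine ⟨fun t => if t ≤ s then u t else b, fun t => if t ≤ s then y t else j, ?_, ?_, ?_, ?_⟩
      · simp [hu]
      · simp
      · intro k hk
        by_cases h : k ≤ s
        · simpa [h] using hP1 k h
        · have : k = s + 1 := by omega
          simp [this, hK]
      · intro k hk
        by_cases h : k + 1 ≤ s
        · simp only [show k ≤ s by omega, h, if_pos]
          exact hP2 k (by omega)
        · have hks : k = s := by omega
          subst hks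
          simpa [hy] using hG
    · rintro ⟨u, y, hu, hy, hP1, hP2⟩
      refine ⟨y s, ?_, ?_⟩
      · exact (ih (y s)).2 ⟨u, y, hu, rfl, fun k hk => hP1 k (by omega), fun k hk => hP2 k (by omega)⟩
      · rw [bmul_true_iff]
        exact ⟨u (s + 1), hP2 s (by omega), hy ▸ hP1 (s + 1) le_rfl⟩

lemma splice {nu ny : ℕ} (K : Matrix (Fin nu) (Fin ny) Bool) (G : Matrix (Fin ny) (Fin nu) Bool)
    {s c d : ℕ} {u : ℕ → Fin nu} {y : ℕ → Fin ny}
    (hd : 1 ≤ d) (hcd : c + d ≤ s) (hP : IsPath K G s u y)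
    (h0 : c = 0 → u d = u 0) (hG : 1 ≤ c → G (y (c - 1)) (u (c + d)) = true) :
    ∃ u' y', u' 0 = u 0 ∧ y' (s - d) = y s ∧ IsPath K G (s - d) u' y' := by
  refine ⟨fun t => if t < c then u t else u (t + d), fun t => if t < c then y t else y (t + d),
    ?_, ?_, ?_, ?_⟩
  · by_cases h : 0 < c
    · simp [h]
    · have hc0 : c = 0 := by omega
      simp [hc0, h0 hc0]
  · have : ¬ s - d < c := by omega
    simp only [this, if_neg, not_false_iff]
    congr 1
    omega
  · intro k hk
    by_cases h : k < c
    · simpa [h] using hP.1 k (by omega)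
    · simpa [h] using hP.1 (k + d) (by omega)
  · intro k hk
    by_cases h1 : k + 1 < c
    · simp only [if_pos (show k < c by omega), if_pos h1]
      exact hP.2 k (by omega)
    · by_cases h2 : k < c
      · have hc : k + 1 = c := by omega
        simp only [if_pos h2, if_neg (show ¬ k + 1 < c by omega)]
        have := hG (by omega)
        have hk1 : k = c - 1 := by omega
        rw [hk1, show c - 1 + 1 + d = c + d by omega]
        exact this
      · simp only [if_neg h2, if_neg (show ¬ k + 1 < c by omega)]
        rw [show k + 1 + d = k + d + 1 by omega]
        exact hP.2 (k + d) (by omega)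

lemma shorten {nu ny : ℕ} (K : Matrix (Fin nu) (Fin ny) Bool) (G : Matrix (Fin ny) (Fin nu) Bool)
    (s : ℕ) (i : Fin nu) (j : Fin ny) (h : kterm K G s i j = true) :
    ∃ t, t < min nu ny ∧ kterm K G t i j = true := by
  induction s using Nat.strong_induction_on with
  | _ s IH =>
  by_cases hs : s < min nu ny
  · exact ⟨s, hs, h⟩
  push_neg at hs
  obtain ⟨u, y, hu, hy, hP⟩ := (kterm_true_iff K G s i j).1 h
  suffices hsuf : ∃ s' < s, kterm K G s' i j = true by
    obtain ⟨s', hs', h'⟩ := hsuf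
    exact IH s' hs' h'
  by_cases hcase : nu ≤ ny
  · -- pigeonhole on u over indices 0..s
    have hcard : Fintype.card (Fin nu) < Fintype.card (Fin (s + 1)) := by
      simp only [Fintype.card_fin]; omega
    obtain ⟨a, b, hab, heq⟩ := Fintype.exists_ne_map_eq_of_card_lt (fun t : Fin (s + 1) => u t) hcard
    set k := min a.val b.val with hk
    set l := max a.val b.val with hl
    have hkl : k < l := by
      rcases lt_or_gt_of_ne (Fin.val_ne_of_ne hab) with h1 | h1 <;> omega
    have hls : l ≤ s := by
      have := a.isLt; have := b.isLt; omega
    have hukl : u k = u l := by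
      rcases le_total a.val b.val with h1 | h1
      · rw [show k = a.val by omega, show l = b.val by omega]; exact heq
      · rw [show k = b.val by omega, show l = a.val by omega]; exact heq.symm
    obtain ⟨u', y', hu', hy', hP'⟩ := splice K G (show 1 ≤ l - k by omega)
      (show k + (l - k) ≤ s by omega) hP
      (fun hc0 => by rw [show l - k = l by omega, ← hukl, hc0])
      (fun hc1 => by
        rw [show k + (l - k) = l by omega, ← hukl, show k = k - 1 + 1 by omega]
        exact hP.2 (k - 1) (by omega))
    refine ⟨s - (l - k), by omega, (kterm_true_iff K G _ i j).2 ⟨u', y', ?_, ?_, hP'⟩⟩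
    · rw [hu', hu]
    · rw [hy', hy]
  · -- pigeonhole on y over indices 0..s
    push_neg at hcase
    have hcard : Fintype.card (Fin ny) < Fintype.card (Fin (s + 1)) := by
      simp only [Fintype.card_fin]; omega
    obtain ⟨a, b, hab, heq⟩ := Fintype.exists_ne_map_eq_of_card_lt (fun t : Fin (s + 1) => y t) hcard
    set k := min a.val b.val with hk
    set l := max a.val b.val with hl
    have hkl : k < l := by
      rcases lt_or_gt_of_ne (Fin.val_ne_of_ne hab) with h1 | h1 <;> omega
    have hls : l ≤ s := by
      have := a.isLt; have := b.isLt; omega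
    have hykl : y k = y l := by
      rcases le_total a.val b.val with h1 | h1
      · rw [show k = a.val by omega, show l = b.val by omega]; exact heq
      · rw [show k = b.val by omega, show l = a.val by omega]; exact heq.symm
    by_cases hlast : l = s
    · -- truncate at k
      refine ⟨k, by omega, (kterm_true_iff K G _ i j).2 ⟨u, y, hu, ?_, ?_, ?_⟩⟩
      · rw [hykl, hlast, hy]
      · exact fun t ht => hP.1 t (by omega)
      · exact fun t ht => hP.2 t (by omega)
    · -- splice with c = k + 1
      obtain ⟨u', y', hu', hy', hP'⟩ := splice K G (show 1 ≤ l - k by omega)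
        (show (k + 1) + (l - k) ≤ s by omega) hP
        (fun hc0 => by omega)
        (fun _ => by
          rw [show k + 1 - 1 = k by omega, show k + 1 + (l - k) = l + 1 by omega, hykl]
          exact hP.2 l (by omega))
      refine ⟨s - (l - k), by omega, (kterm_true_iff K G _ i j).2 ⟨u', y', ?_, ?_, hP'⟩⟩
      · rw [hu', hu]
      · rw [hy', hy]

lemma bsum_true_iff {a b : ℕ} (N : ℕ) (f : ℕ → Matrix (Fin a) (Fin b) Bool) (i : Fin a) (j : Fin b) :
    bsum N f i j = true ↔ ∃ s < N, f s i j = true := by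
  constructor
  · intro h
    by_contra hc
    push_neg at hc
    have : ((Finset.range N).sup fun s => f s i j) = false := by
      rw [show (false : Bool) = ⊥ from rfl, Finset.sup_eq_bot_iff]
      intro s hsm
      have := hc s (Finset.mem_range.1 hsm)
      exact Bool.eq_false_iff.2 (by simpa using this)
    rw [bsum, this] at h
    exact Bool.false_ne_true h
  · rintro ⟨s, hsN, hs⟩
    have := Finset.le_sup (f := fun s => f s i j) (Finset.mem_range.2 hsN)
    simp only [hs] at this
    exact le_antisymm (by simp) this

lemma glue_true_iff {nu ny : ℕ} (K : Matrix (Fin nu) (Fin ny) Bool) (G : Matrix (Fin ny) (Fin nu) Bool)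
    (s t : ℕ) (i : Fin nu) (j : Fin ny) :
    kterm K G (s + t + 1) i j = true ↔
      ∃ a b, kterm K G s i b = true ∧ G b a = true ∧ kterm K G t a j = true := by
  rw [← kterm_glue, bmul_true_iff]
  constructor
  · rintro ⟨a, ha, hta⟩
    rw [bmul_true_iff] at ha
    obtain ⟨b, hb, hGba⟩ := ha
    exact ⟨a, b, hb, hGba, hta⟩
  · rintro ⟨a, b, hb, hGba, hta⟩
    exact ⟨a, (bmul_true_iff _ _ _ _).2 ⟨b, hb, hGba⟩, hta⟩

lemma Zseq_eq_bsum {nu ny : ℕ} (K : Matrix (Fin nu) (Fin ny) Bool) (G : Matrix (Fin ny) (Fin nu) Bool)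
    (m : ℕ) : Zseq K G m = bsum (2 ^ m) (kterm K G) := by
  induction m with
  | zero =>
    funext i j
    rw [Bool.eq_iff_iff, bsum_true_iff]
    constructor
    · intro h; exact ⟨0, by norm_num, h⟩
    · rintro ⟨s, hs, h⟩
      have : s = 0 := by omega
      subst this; exact h
  | succ m ih =>
    funext i j
    show badd (Zseq K G m) (bmul (bmul (Zseq K G m) G) (Zseq K G m)) i j = _
    rw [ih, Bool.eq_iff_iff, bsum_true_iff]
    show (bsum (2 ^ m) (kterm K G) i j || _) = true ↔ _
    rw [Bool.or_eq_true, bsum_true_iff, bmul_true_iff]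
    constructor
    · rintro (⟨s, hs, h⟩ | ⟨a, ha, hta⟩)
      · exact ⟨s, by have := Nat.one_le_two_pow (n := m); omega, h⟩
      · rw [bmul_true_iff] at ha
        obtain ⟨b, hb, hGba⟩ := ha
        rw [bsum_true_iff] at hb hta
        obtain ⟨s, hs, hsb⟩ := hb
        obtain ⟨t, ht, htaj⟩ := hta
        refine ⟨s + t + 1, by ring_nf; omega, ?_⟩
        exact (glue_true_iff K G s t i j).2 ⟨a, b, hsb, hGba, htaj⟩
    · rintro ⟨r, hr, h⟩
      by_cases hrm : r < 2 ^ m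
      · exact Or.inl ⟨r, hrm, h⟩
      · right
        push_neg at hrm
        have h1 : 1 ≤ 2 ^ m := Nat.one_le_two_pow
        have hrw : r = (2 ^ m - 1) + (r - 2 ^ m) + 1 := by omega
        rw [hrw] at h
        obtain ⟨a, b, hsb, hGba, htaj⟩ := (glue_true_iff K G _ _ i j).1 h
        refine ⟨a, (bmul_true_iff _ _ _ _).2 ⟨b, ?_, hGba⟩, ?_⟩
        · exact (bsum_true_iff _ _ _ _).2 ⟨2 ^ m - 1, by omega, hsb⟩
        · refine (bsum_true_iff _ _ _ _).2 ⟨r - 2 ^ m, by rw [pow_succ] at hr; omega, htaj⟩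

lemma bsum_stable {nu ny : ℕ} (K : Matrix (Fin nu) (Fin ny) Bool) (G : Matrix (Fin ny) (Fin nu) Bool)
    (N : ℕ) (hN : min nu ny ≤ N) :
    bsum N (kterm K G) = bsum (min nu ny) (kterm K G) := by
  funext i j
  rw [Bool.eq_iff_iff, bsum_true_iff, bsum_true_iff]
  constructor
  · rintro ⟨s, _, h⟩
    obtain ⟨t, ht, h'⟩ := shorten K G s i j h
    exact ⟨t, ht, h'⟩
  · rintro ⟨s, hs, h⟩
    exact ⟨s, by omega, h⟩


theorem stmt8 {nu ny : ℕ} (K : Matrix (Fin nu) (Fin ny) Bool)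
    (G : Matrix (Fin ny) (Fin nu) Bool) (hn : 1 ≤ min nu ny) :
    Zseq K G (Nat.clog 2 (min nu ny)) = Zseq K G (Nat.clog 2 (min nu ny) + 1) := by
  have h1 : min nu ny ≤ 2 ^ Nat.clog 2 (min nu ny) := Nat.le_pow_clog (by norm_num) _
  have h2 : min nu ny ≤ 2 ^ (Nat.clog 2 (min nu ny) + 1) :=
    le_trans h1 (Nat.pow_le_pow_right (by norm_num) (by omega))
  rw [Zseq_eq_bsum, Zseq_eq_bsum, bsum_stable K G _ h1, bsum_stable K G _ h2]
end
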